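/- Let p be a prime and let C_0 be the subgroup of Sym(ℤ/pℤ) generated by the p-cycle (0 1 2 … p−1). Then S = {(f, 1) ∈ H : f ∈ C_0} (where 1 denotes the constant function 1) is a Sylow p-subgroup of H; its normalizer in H is N_H(S) = {(g, g′) ∈ H : there exists k ≠ 0 in ℤ/pℤ with g(a) − g(b) = k·(a − b) for all a, b ∈ ℤ/pℤ, and g′ is a nonzero constant function}; and |N_H(S)| = p·(p−1)², so the index of N_H(S) in H is (p−1)!·(p−1)^{p−2}. -/

import Mathlib

/-- The group `H`: pairs `(f, f')` with `f` a permutation of `ℤ/pℤ` and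
`f' : ℤ/pℤ → ℤ/pℤ∖{0}` an arbitrary function (encoded as taking values in the
units `(ℤ/pℤ)ˣ`), with multiplication `(f,f')∘(g,g') = (f∘g, (f'∘g)·g')`. -/
@[ext]
structure Hgrp (p : ℕ) where
  perm : Equiv.Perm (ZMod p)
  der : ZMod p → (ZMod p)ˣ

namespace Hgrp

instance (p : ℕ) : Group (Hgrp p) where
  mul a b := ⟨a.perm * b.perm, fun x => a.der (b.perm x) * b.der x⟩
  one := ⟨1, 1⟩
  inv a := ⟨a.perm⁻¹, fun x => (a.der (a.perm⁻¹ x))⁻¹⟩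
  mul_assoc a b c := by
    refine Hgrp.ext (mul_assoc _ _ _) ?_
    funext x
    exact mul_assoc _ _ _
  one_mul a := by
    refine Hgrp.ext (one_mul _) ?_
    funext x
    exact one_mul _
  mul_one a := by
    refine Hgrp.ext (mul_one _) ?_
    funext x
    exact mul_one _
  inv_mul_cancel a := by
    refine Hgrp.ext (inv_mul_cancel _) ?_
    funext x
    show (a.der (a.perm⁻¹ (a.perm x)))⁻¹ * a.der x = 1
    rw [Equiv.Perm.inv_def, Equiv.symm_apply_apply, inv_mul_cancel]

theorem mul_def {p : ℕ} (a b : Hgrp p) :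
    a * b = ⟨a.perm * b.perm, fun x => a.der (b.perm x) * b.der x⟩ := rfl

theorem one_def {p : ℕ} : (1 : Hgrp p) = ⟨1, 1⟩ := rfl

end Hgrp

open Subgroup

section Aux

theorem HgrpAux.perm_mul {p : ℕ} (a b : Hgrp p) : (a * b).perm = a.perm * b.perm := rfl
theorem HgrpAux.der_mul {p : ℕ} (a b : Hgrp p) (x : ZMod p) :
    (a * b).der x = a.der (b.perm x) * b.der x := rfl
theorem HgrpAux.perm_inv {p : ℕ} (a : Hgrp p) : (a⁻¹).perm = a.perm⁻¹ := rfl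
theorem HgrpAux.der_inv {p : ℕ} (a : Hgrp p) (x : ZMod p) :
    (a⁻¹).der x = (a.der (a.perm⁻¹ x))⁻¹ := rfl

variable (p : ℕ) [Fact p.Prime]

theorem HgrpAux.sig_pow (n : ℕ) :
    (Equiv.addRight (1 : ZMod p)) ^ n = Equiv.addRight (n : ZMod p) := by
  induction n with
  | zero => simp
  | succ n ih =>
    ext x
    simp [pow_succ, ih, Equiv.Perm.mul_apply]
    ring

theorem HgrpAux.mem_zp (f : Equiv.Perm (ZMod p)) :
    f ∈ zpowers (Equiv.addRight (1 : ZMod p)) ↔ ∃ c : ZMod p, f = Equiv.addRight c := by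
  constructor
  · intro hf
    rw [← mem_powers_iff_mem_zpowers, Submonoid.mem_powers_iff] at hf
    obtain ⟨n, rfl⟩ := hf
    exact ⟨n, sig_pow p n⟩
  · rintro ⟨c, rfl⟩
    rw [← mem_powers_iff_mem_zpowers, Submonoid.mem_powers_iff]
    exact ⟨c.val, by rw [sig_pow, ZMod.natCast_val, ZMod.cast_id]⟩

theorem HgrpAux.ord_sig : orderOf (Equiv.addRight (1 : ZMod p)) = p := by
  refine orderOf_eq_prime ?_ ?_
  · rw [sig_pow]; simp
  · intro h
    have := congrArg (fun e => e.toFun 0) h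
    simp [Equiv.addRight] at this

open HgrpAux

/-- The candidate Sylow subgroup. -/
def Ssub : Subgroup (Hgrp p) where
  carrier := {h : Hgrp p |
    h.perm ∈ Subgroup.zpowers (Equiv.addRight (1 : ZMod p)) ∧ h.der = 1}
  one_mem' := ⟨one_mem _, rfl⟩
  mul_mem' := by
    rintro a b ⟨ha, ha'⟩ ⟨hb, hb'⟩
    refine ⟨mul_mem ha hb, ?_⟩
    funext x
    show a.der (b.perm x) * b.der x = 1
    rw [ha', hb']; simp
  inv_mem' := by
    rintro a ⟨ha, ha'⟩
    refine ⟨inv_mem ha, ?_⟩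
    funext x
    show (a.der (a.perm⁻¹ x))⁻¹ = 1
    rw [ha']; simp

def hequiv : Hgrp p ≃ Equiv.Perm (ZMod p) × (ZMod p → (ZMod p)ˣ) where
  toFun h := (h.perm, h.der)
  invFun x := ⟨x.1, x.2⟩
  left_inv _ := rfl
  right_inv _ := rfl

instance : Finite (Hgrp p) := Finite.of_equiv _ (hequiv p).symm

theorem card_H : Nat.card (Hgrp p) = p.factorial * (p - 1) ^ p := by
  have hp : 0 < p := (Fact.out : p.Prime).pos
  rw [Nat.card_congr (hequiv p), Nat.card_prod, Nat.card_fun]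
  rw [Nat.card_eq_fintype_card (α := Equiv.Perm (ZMod p)), Fintype.card_perm]
  rw [Nat.card_eq_fintype_card (α := (ZMod p)ˣ), ZMod.card_units_eq_totient,
    Nat.totient_prime (Fact.out), Nat.card_eq_fintype_card (α := ZMod p), ZMod.card]

def sequiv : Ssub p ≃ zpowers (Equiv.addRight (1 : ZMod p)) where
  toFun h := ⟨h.1.perm, h.2.1⟩
  invFun f := ⟨⟨f.1, 1⟩, f.2, rfl⟩
  left_inv h := by
    apply Subtype.ext
    exact Hgrp.ext rfl h.2.2.symm
  right_inv f := rfl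

theorem card_S : Nat.card (Ssub p) = p := by
  rw [Nat.card_congr (sequiv p), Nat.card_zpowers, ord_sig]

theorem index_S : (Ssub p).index = (p - 1).factorial * (p - 1) ^ p := by
  have hp : 0 < p := (Fact.out : p.Prime).pos
  have h := Subgroup.card_mul_index (Ssub p)
  rw [card_S, card_H] at h
  have h2 : p.factorial = p * (p - 1).factorial :=
    (Nat.mul_factorial_pred hp.ne').symm
  rw [h2, mul_assoc] at h
  exact Nat.eq_of_mul_eq_mul_left hp h

theorem not_dvd_index : ¬ p ∣ (Ssub p).index := by
  have hp : p.Prime := Fact.out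
  rw [index_S]
  rintro hd
  have hp2 : 2 ≤ p := hp.two_le
  rcases hp.dvd_mul.mp hd with h | h
  · have := (Nat.Prime.dvd_factorial hp).mp h
    omega
  · have h1 : p ∣ p - 1 := hp.dvd_of_dvd_pow h
    have := Nat.le_of_dvd (by omega) h1
    omega

theorem isP : IsPGroup p (Ssub p) :=
  IsPGroup.of_card (by rw [card_S]; exact (pow_one p).symm)


theorem const_of_step {g' : ZMod p → (ZMod p)ˣ} (hstep : ∀ y, g' (y + 1) = g' y)
    (y : ZMod p) : g' y = g' 0 := by
  have key : ∀ n : ℕ, g' (n : ZMod p) = g' 0 := by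
    intro n
    induction n with
    | zero => simp
    | succ n ih => rw [Nat.cast_succ, hstep, ih]
  have hy : y = ((y.val : ℕ) : ZMod p) := by rw [ZMod.natCast_val, ZMod.cast_id]
  rw [hy, key]

theorem affine_of_step {g : Equiv.Perm (ZMod p)} {c : ZMod p}
    (hstep : ∀ x, g (x + 1) = g x + c) (a b : ZMod p) : g a - g b = c * (a - b) := by
  have key : ∀ n : ℕ, ∀ b : ZMod p, g (b + n) = g b + n * c := by
    intro n
    induction n with
    | zero => simp
    | succ n ih =>
      intro b
      rw [Nat.cast_succ, ← add_assoc, hstep, ih]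
      ring
  have hab : a = b + (((a - b).val : ℕ) : ZMod p) := by
    rw [ZMod.natCast_val, ZMod.cast_id]; ring
  rw [hab, key, ZMod.natCast_val, ZMod.cast_id]
  ring

theorem norm_eq : ((normalizer ((Ssub p : Set (Hgrp p))) : Subgroup (Hgrp p)) : Set (Hgrp p)) =
    {h : Hgrp p |
      (∃ k : ZMod p, k ≠ 0 ∧ ∀ a b : ZMod p, h.perm a - h.perm b = k * (a - b)) ∧
      ∃ u : (ZMod p)ˣ, h.der = fun _ => u} := by
  ext h
  simp only [SetLike.mem_coe, Set.mem_setOf_eq]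
  constructor
  · intro hh
    rw [mem_normalizer_iff] at hh
    have hs0 : (⟨Equiv.addRight 1, 1⟩ : Hgrp p) ∈ Ssub p := ⟨mem_zpowers _, rfl⟩
    obtain ⟨hcp, hcd⟩ := (hh _).mp hs0
    -- the derivative is constant
    have hder : ∀ y : ZMod p, h.der (y + 1) = h.der y := by
      intro y
      have hx := congrFun hcd (h.perm y)
      have hx2 : h.der (h.perm⁻¹ (h.perm y) + 1) * 1 * (h.der (h.perm⁻¹ (h.perm y)))⁻¹
          = 1 := hx
      rw [Equiv.Perm.inv_def, Equiv.symm_apply_apply] at hx2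
      rw [mul_one] at hx2
      have := mul_eq_one_iff_eq_inv.mp hx2
      rw [inv_inv] at this
      exact this
    -- the permutation is affine
    obtain ⟨c, hc⟩ := (mem_zp p _).mp hcp
    have hstep : ∀ x : ZMod p, h.perm (x + 1) = h.perm x + c := by
      intro x
      have h1 : (h * ⟨Equiv.addRight 1, 1⟩ * h⁻¹).perm (h.perm x)
          = Equiv.addRight c (h.perm x) := by rw [hc]
      have h2 : (h * ⟨Equiv.addRight 1, 1⟩ * h⁻¹).perm (h.perm x) = h.perm (x + 1) := by
        show h.perm ((Equiv.addRight 1) (h.perm⁻¹ (h.perm x))) = _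
        rw [Equiv.Perm.inv_def, Equiv.symm_apply_apply]
        rfl
      rw [h2] at h1
      simpa using h1
    have hc0 : c ≠ 0 := by
      intro h0
      rw [h0] at hstep
      have := h.perm.injective (by rw [hstep 0, add_zero] :
        h.perm (0 + 1) = h.perm 0)
      simp at this
    refine ⟨⟨c, hc0, affine_of_step p hstep⟩, h.der 0, ?_⟩
    funext y
    exact const_of_step p hder y
  · rintro ⟨⟨k, hk, hgab⟩, u, hu⟩
    have hstep : ∀ y c : ZMod p, h.perm (y + c) = h.perm y + k * c := by
      intro y c
      have := hgab (y + c) y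
      have h2 : y + c - y = c := by ring
      rw [h2, sub_eq_iff_eq_add] at this
      rw [this, add_comm]
    exact Subgroup.mem_normalizer_fintype (fun s hs => by
      obtain ⟨hsp, hsd⟩ := hs
      obtain ⟨c, hc⟩ := (mem_zp p s.perm).mp hsp
      refine ⟨?_, ?_⟩
      · rw [mem_zp]
        refine ⟨k * c, ?_⟩
        ext x
        show h.perm (s.perm (h.perm⁻¹ x)) = x + k * c
        rw [hc]
        have := hstep (h.perm⁻¹ x) c
        simp only [Equiv.coe_addRight]
        rw [this, Equiv.Perm.inv_def, Equiv.apply_symm_apply]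
      · funext x
        show h.der (s.perm (h.perm⁻¹ x)) * s.der (h.perm⁻¹ x)
            * (h.der (h.perm⁻¹ x))⁻¹ = 1
        rw [hsd, hu]
        simp)


noncomputable def nequiv :
    {h : Hgrp p |
      (∃ k : ZMod p, k ≠ 0 ∧ ∀ a b : ZMod p, h.perm a - h.perm b = k * (a - b)) ∧
      ∃ u : (ZMod p)ˣ, h.der = fun _ => u} ≃ (ZMod p)ˣ × ZMod p × (ZMod p)ˣ where
  toFun h := (Units.mk0 (h.1.perm 1 - h.1.perm 0)
      (by obtain ⟨⟨k, hk, hab⟩, _⟩ := h.2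
          rw [hab 1 0]
          simpa using hk),
    h.1.perm 0, h.1.der 0)
  invFun t := ⟨⟨(Equiv.mulLeft₀ (t.1 : ZMod p) t.1.ne_zero).trans (Equiv.addRight t.2.1),
      fun _ => t.2.2⟩,
    ⟨⟨(t.1 : ZMod p), t.1.ne_zero, fun a b => by
        simp [Equiv.mulLeft₀]
        ring⟩, ⟨t.2.2, rfl⟩⟩⟩
  left_inv h := by
    obtain ⟨⟨k, hk, hab⟩, u, hu⟩ := h.2
    apply Subtype.ext
    refine Hgrp.ext ?_ ?_
    · ext x
      show (h.1.perm 1 - h.1.perm 0) * x + h.1.perm 0 = h.1.perm x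
      linear_combination x * hab 1 0 - hab x 0
    · simp [hu]
  right_inv t := by
    obtain ⟨k, c, u⟩ := t
    refine Prod.ext ?_ (Prod.ext ?_ ?_)
    · apply Units.ext
      show ((k : ZMod p) * 1 + c) - ((k : ZMod p) * 0 + c) = (k : ZMod p)
      ring
    · show (k : ZMod p) * 0 + c = c
      ring
    · rfl

theorem card_N : Nat.card (normalizer ((Ssub p : Set (Hgrp p)))) = p * (p - 1) ^ 2 := by
  have h1 : Nat.card (normalizer ((Ssub p : Set (Hgrp p)))) =
      Nat.card ((ZMod p)ˣ × ZMod p × (ZMod p)ˣ) :=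
    Nat.card_congr ((Equiv.setCongr (norm_eq p)).trans (nequiv p))
  rw [h1, Nat.card_prod, Nat.card_prod]
  rw [Nat.card_eq_fintype_card (α := (ZMod p)ˣ), ZMod.card_units_eq_totient,
    Nat.totient_prime (Fact.out), Nat.card_eq_fintype_card (α := ZMod p), ZMod.card]
  ring

theorem index_N : (normalizer ((Ssub p : Set (Hgrp p)))).index = (p - 1).factorial * (p - 1) ^ (p - 2) := by
  have hp : p.Prime := Fact.out
  have hp2 : 2 ≤ p := hp.two_le
  have h := Subgroup.card_mul_index (normalizer ((Ssub p : Set (Hgrp p))))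
  rw [card_N, card_H] at h
  have h2 : p.factorial * (p - 1) ^ p
      = p * (p - 1) ^ 2 * ((p - 1).factorial * (p - 1) ^ (p - 2)) := by
    rw [← Nat.mul_factorial_pred hp.pos.ne']
    have hpow : (p - 1) ^ p = (p - 1) ^ 2 * (p - 1) ^ (p - 2) := by
      rw [← pow_add]
      congr 1
      omega
    rw [hpow]
    ring
  rw [h2] at h
  have hpos : 0 < p * (p - 1) ^ 2 :=
    Nat.mul_pos hp.pos (pow_pos (by omega) 2)
  exact Nat.eq_of_mul_eq_mul_left hpos h

end Aux


/-- Let `C₀` be the subgroup of the symmetric group on `ℤ/pℤ` generated by the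
`p`-cycle `(0 1 2 … p-1)` (i.e. `x ↦ x + 1`).  Then
`S = {(f, 1) ∈ H : f ∈ C₀}` is a Sylow `p`-subgroup of `H`, its normalizer is
`N_H(S) = {(g, g') ∈ H : ∃ k ≠ 0, g(a) - g(b) = k(a-b) for all a b, and g'
is a (nonzero) constant}`, the normalizer has order `p·(p-1)²`, and its index
in `H` is `(p-1)!·(p-1)^{p-2}`. -/
theorem sylow_of_H_and_normalizer (p : ℕ) [Fact p.Prime] :
    ∃ P : Sylow p (Hgrp p),
      ((P : Subgroup (Hgrp p)) : Set (Hgrp p)) =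
        {h : Hgrp p |
          h.perm ∈ Subgroup.zpowers (Equiv.addRight (1 : ZMod p)) ∧ h.der = 1} ∧
      (Subgroup.normalizer ((P : Subgroup (Hgrp p)) : Set (Hgrp p)) : Set (Hgrp p)) =
        {h : Hgrp p |
          (∃ k : ZMod p, k ≠ 0 ∧ ∀ a b : ZMod p, h.perm a - h.perm b = k * (a - b)) ∧
          ∃ u : (ZMod p)ˣ, h.der = fun _ => u} ∧
      Nat.card (Subgroup.normalizer ((P : Subgroup (Hgrp p)) : Set (Hgrp p))) = p * (p - 1) ^ 2 ∧
      (Subgroup.normalizer ((P : Subgroup (Hgrp p)) : Set (Hgrp p))).index =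
        Nat.factorial (p - 1) * (p - 1) ^ (p - 2) := by
  exact ⟨(isP p).toSylow (not_dvd_index p), rfl, norm_eq p, card_N p, index_N p⟩
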